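/- Let M be the 3×3 nonnegative integer matrix with rows (1,2,0), (1,0,2), (1,0,0). Then the characteristic polynomial of M is X³ − X² − 2X − 4, and there exists a constant C such that the vector norm of (2,2,2)·Mⁿ·(0,0,1)ᵀ is at most C·(2/η)ⁿ for all n, where 2/η is the unique positive real root of X³−X²−2X−4. -/

import Mathlib

open Polynomial in
/-- Let `M` be the matrix with rows `(1,2,0), (1,0,2), (1,0,0)`. Its
characteristic polynomial is `X³ - X² - 2X - 4`, and there is a constant `C`
such that `(2,2,2)·Mⁿ·(0,0,1)ᵀ ≤ C (2/η)ⁿ` for all `n`, where `η` is the real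
root of `X³ + X² + X - 2` (so `2/η` is the unique positive real root of
`X³ - X² - 2X - 4`). -/
theorem substitution_matrix_growth (η : ℝ) (hη : η ^ 3 + η ^ 2 + η - 2 = 0) :
    (Matrix.charpoly (!![1, 2, 0; 1, 0, 2; 1, 0, 0] : Matrix (Fin 3) (Fin 3) ℝ)
        = X ^ 3 - X ^ 2 - C 2 * X - C 4) ∧
    ∃ c : ℝ, 0 < c ∧ ∀ n : ℕ,
      dotProduct ![2, 2, 2]
          (((!![1, 2, 0; 1, 0, 2; 1, 0, 0] : Matrix (Fin 3) (Fin 3) ℝ) ^ n).mulVec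
            ![0, 0, 1])
        ≤ c * (2 / η) ^ n := by
  constructor
  · simp [Matrix.charpoly, Matrix.charmatrix, Matrix.det_fin_three, Matrix.vecHead,
      Matrix.vecTail]
    rw [show (Polynomial.C 2 * Polynomial.C 2 : ℝ[X]) = Polynomial.C 4 by
      rw [← Polynomial.C_mul]; norm_num]
    ring
  · set M : Matrix (Fin 3) (Fin 3) ℝ := !![1, 2, 0; 1, 0, 2; 1, 0, 0] with hM
    have hηpos : 0 < η := by nlinarith [sq_nonneg η, sq_nonneg (η + 1)]
    set ρ : ℝ := 2 / η with hρ
    have hρpos : 0 < ρ := by positivity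
    have hρ3 : ρ ^ 3 = ρ ^ 2 + 2 * ρ + 4 := by
      rw [hρ]; field_simp; nlinarith [hη, sq_nonneg η]
    have hρ1 : 1 ≤ ρ := by
      rw [hρ, le_div_iff₀ hηpos]; nlinarith [sq_nonneg η, sq_nonneg (η - 1)]
    have hmul : ∀ v : Fin 3 → ℝ, M.mulVec v = ![v 0 + 2 * v 1, v 0 + 2 * v 2, v 0] := by
      intro v
      funext i
      fin_cases i <;> simp [hM, Matrix.mulVec, dotProduct, Fin.sum_univ_three]
    have key : ∀ n : ℕ,
        (0 ≤ (M ^ n).mulVec ![0, 0, 1] 0 ∧ 0 ≤ (M ^ n).mulVec ![0, 0, 1] 1 ∧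
          0 ≤ (M ^ n).mulVec ![0, 0, 1] 2) ∧
        ((M ^ n).mulVec ![0, 0, 1] 0 ≤ ρ ^ n * ρ ^ 2 ∧
          (M ^ n).mulVec ![0, 0, 1] 1 ≤ ρ ^ n * (ρ + 2) ∧
          (M ^ n).mulVec ![0, 0, 1] 2 ≤ ρ ^ n * ρ) := by
      intro n
      induction n with
      | zero => simp; constructor; · nlinarith
                constructor <;> nlinarith
      | succ n ih =>
        obtain ⟨⟨h0, h1, h2⟩, b0, b1, b2⟩ := ih
        have hstep : (M ^ (n + 1)).mulVec ![0, 0, 1] = M.mulVec ((M ^ n).mulVec ![0, 0, 1]) := by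
          rw [pow_succ', Matrix.mulVec_mulVec]
        rw [hstep, hmul]
        have hρn : 0 ≤ ρ ^ n := by positivity
        refine ⟨⟨by simp; linarith, by simp; linarith, by simp; linarith⟩, ?_, ?_, ?_⟩
        · simp only [Matrix.cons_val_zero]
          have : ρ ^ (n + 1) * ρ ^ 2 = ρ ^ n * (ρ ^ 2 + 2 * (ρ + 2)) := by
            rw [pow_succ]; nlinarith [hρ3]
          rw [this]; nlinarith
        · simp only [Matrix.cons_val_one, Matrix.head_cons, Matrix.cons_val_zero]
          have : ρ ^ (n + 1) * (ρ + 2) = ρ ^ n * (ρ ^ 2 + 2 * ρ) := by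
            rw [pow_succ]; ring
          rw [this]; nlinarith
        · simp only [Matrix.cons_val_two, Matrix.tail_cons, Matrix.head_cons]
          have : ρ ^ (n + 1) * ρ = ρ ^ n * ρ ^ 2 := by rw [pow_succ]; ring
          rw [this]; nlinarith
    refine ⟨2 * (ρ ^ 2 + 2 * ρ + 2), by nlinarith, fun n => ?_⟩
    obtain ⟨⟨h0, h1, h2⟩, b0, b1, b2⟩ := key n
    have hρn : 0 ≤ ρ ^ n := by positivity
    have : dotProduct ![2, 2, 2] ((M ^ n).mulVec ![0, 0, 1])
        = 2 * (M ^ n).mulVec ![0, 0, 1] 0 + 2 * (M ^ n).mulVec ![0, 0, 1] 1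
          + 2 * (M ^ n).mulVec ![0, 0, 1] 2 := by
      simp [dotProduct, Fin.sum_univ_three]
    rw [this]
    nlinarith
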